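/- arXiv:2507.19182 — 7 statements merged into one kernel-verified Lean document; each statement's English description precedes it below -/
import Mathlib

section
/- Define T : ℕ → (Fin p → ℕ) → R by: T_1(δ_l) = w(l) for each l ∈ Fin p and T_1(κ) = 0 for every other κ; and for h ≥ 1, T_{h+1}(κ) = Σ_{l : κ(l) ≥ 1} T_h(κ − δ_l) · w(l) · ∏_{i ∈ Fin p} r(i)(l)^{(κ−δ_l)(i)}. Then for every n ≥ 1 and every κ : Fin p → ℕ with Σ_i κ(i) = n, one has T_n(κ) = Σ_{c : Fin n → Fin p, config(c) = κ} W_n(c). -/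
open Finset

/-- The cell configuration of a cell assignment. -/
def cellConfig {p n : ℕ} (c : Fin n → Fin p) : Fin p → ℕ :=
  fun i => (Finset.univ.filter (fun a => c a = i)).card

/-- The indicator vector `δ_l`. -/
def delta {p : ℕ} (l : Fin p) : Fin p → ℕ := fun i => if i = l then 1 else 0

/-- The ordered weight of a cell assignment. -/
def ordW {R : Type*} [CommRing R] {p n : ℕ} (w : Fin p → R) (r : Fin p → Fin p → R)
    (c : Fin n → Fin p) : R :=
  (∏ a, w (c a)) * ∏ a, ∏ b ∈ Finset.univ.filter (fun b => a < b), r (c a) (c b)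

/-- The dynamic-programming table `T` of IncrementalWFOMC:
`T 1 (δ_l) = w l` (and `0` on any other configuration), and
`T (h+1) κ = ∑_{l : κ l ≥ 1} T h (κ - δ_l) * w l * ∏ i, r i l ^ ((κ - δ_l) i)`. -/
def T {R : Type*} [CommRing R] {p : ℕ} (w : Fin p → R) (r : Fin p → Fin p → R) :
    ℕ → (Fin p → ℕ) → R
  | 0, _ => 0
  | 1, κ => ∑ l : Fin p, if κ = delta l then w l else 0
  | h + 2, κ =>
      ∑ l ∈ Finset.univ.filter (fun l : Fin p => 1 ≤ κ l),
        T w r (h + 1) (κ - delta l) * w l * ∏ i, r i l ^ ((κ - delta l) i)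

def mySnocEquiv (n : ℕ) (α : Type*) : (Fin n → α) × α ≃ (Fin (n+1) → α) where
  toFun cl := Fin.snoc cl.1 cl.2
  invFun c := (Fin.init c, c (Fin.last n))
  left_inv := by rintro ⟨c, l⟩; simp [Fin.init_snoc]
  right_inv := by intro c; simp [Fin.snoc_init_self]

lemma cellConfig_snoc {p n : ℕ} (c : Fin n → Fin p) (l : Fin p) :
    cellConfig (Fin.snoc c l : Fin (n+1) → Fin p) = cellConfig c + delta l := by
  funext i
  simp only [cellConfig, Pi.add_apply, delta, Finset.card_filter]
  rw [Fin.sum_univ_castSucc]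
  simp [eq_comm]

lemma ordW_snoc {R : Type*} [CommRing R] {p n : ℕ} (w : Fin p → R) (r : Fin p → Fin p → R)
    (c : Fin n → Fin p) (l : Fin p) :
    ordW w r (Fin.snoc c l : Fin (n+1) → Fin p)
      = ordW w r c * w l * ∏ i, r i l ^ cellConfig c i := by
  have h1 : (∏ a, w ((Fin.snoc c l : Fin (n+1) → Fin p) a)) = (∏ a, w (c a)) * w l := by
    rw [Fin.prod_univ_castSucc]; simp
  have h2 : ∀ a : Fin n,
      (∏ b ∈ Finset.univ.filter (fun b : Fin (n+1) => a.castSucc < b),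
        r ((Fin.snoc c l : Fin (n+1) → Fin p) a.castSucc) ((Fin.snoc c l : Fin (n+1) → Fin p) b))
      = (∏ b ∈ Finset.univ.filter (fun b : Fin n => a < b), r (c a) (c b)) * r (c a) l := by
    intro a
    rw [Finset.prod_filter, Fin.prod_univ_castSucc]
    simp [Fin.castSucc_lt_castSucc_iff, Fin.castSucc_lt_last, Finset.prod_filter]
  have h3 : (∏ a : Fin (n+1), ∏ b ∈ Finset.univ.filter (fun b => a < b),
      r ((Fin.snoc c l : Fin (n+1) → Fin p) a) ((Fin.snoc c l : Fin (n+1) → Fin p) b))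
      = (∏ a : Fin n, ∏ b ∈ Finset.univ.filter (fun b => a < b), r (c a) (c b))
        * ∏ a : Fin n, r (c a) l := by
    rw [Fin.prod_univ_castSucc]
    have hlast : (Finset.univ.filter (fun b : Fin (n+1) => Fin.last n < b)) = ∅ := by
      ext b; simp [Fin.le_last b, not_lt.mpr]
    rw [hlast]
    simp only [Finset.prod_empty, mul_one]
    rw [← Finset.prod_mul_distrib]
    exact Finset.prod_congr rfl fun a _ => h2 a
  have h4 : (∏ a : Fin n, r (c a) l) = ∏ i, r i l ^ cellConfig c i := by
    rw [← Finset.prod_fiberwise Finset.univ c (fun a => r (c a) l)]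
    refine Finset.prod_congr rfl fun i _ => ?_
    rw [Finset.prod_congr rfl (fun a ha => by rw [(Finset.mem_filter.1 ha).2]),
      Finset.prod_const]
    rfl
  rw [ordW, ordW, h1, h3, h4]; ring

lemma cellConfig_one {p : ℕ} (c : Fin 1 → Fin p) : cellConfig c = delta (c 0) := by
  funext i
  simp only [cellConfig, delta, Finset.card_filter, Fin.sum_univ_one]
  by_cases h : c 0 = i <;> simp [h, Ne.symm]

lemma ordW_one {R : Type*} [CommRing R] {p : ℕ} (w : Fin p → R) (r : Fin p → Fin p → R)
    (c : Fin 1 → Fin p) : ordW w r c = w (c 0) := by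
  have : ∀ a b : Fin 1, ¬ a < b := by decide
  simp [ordW, this, Fin.prod_univ_one]

lemma add_delta_eq_iff {p : ℕ} {κ ν : Fin p → ℕ} {l : Fin p} (hl : 1 ≤ κ l) :
    ν + delta l = κ ↔ ν = κ - delta l := by
  constructor
  · rintro rfl
    funext i
    simp [Pi.sub_apply]
  · rintro rfl
    funext i
    simp only [Pi.add_apply, Pi.sub_apply, delta]
    by_cases h : i = l <;> simp [h] <;> omega

theorem stmt1 {R : Type*} [CommRing R] {p : ℕ} (hp : 1 ≤ p)
    (w : Fin p → R) (r : Fin p → Fin p → R) (n : ℕ) (hn : 1 ≤ n)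
    (κ : Fin p → ℕ) (hκ : ∑ i, κ i = n) :
    T w r n κ =
      ∑ c ∈ Finset.univ.filter (fun c : Fin n → Fin p => cellConfig c = κ),
        ordW w r c := by
  induction n, hn using Nat.le_induction generalizing κ with
  | base =>
    rw [Finset.sum_filter]
    rw [← Fintype.sum_equiv (Equiv.funUnique (Fin 1) (Fin p)).symm _
      (fun c : Fin 1 → Fin p => if cellConfig c = κ then ordW w r c else 0) (fun l => rfl)]
    show T w r 1 κ = _
    rw [T]
    refine Finset.sum_congr rfl fun l _ => ?_
    show _ = if cellConfig (fun _ : Fin 1 => l) = κ then ordW w r (fun _ : Fin 1 => l) else 0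
    rw [cellConfig_one, ordW_one]
    simp [eq_comm]
  | succ n hn ih =>
    obtain ⟨m, rfl⟩ : ∃ m, n = m + 1 := ⟨n - 1, (Nat.succ_pred_eq_of_pos hn).symm⟩
    rw [Finset.sum_filter]
    rw [← Fintype.sum_equiv (mySnocEquiv (m+1) (Fin p)) _
      (fun c => if cellConfig c = κ then ordW w r c else 0) (fun x => rfl)]
    rw [Fintype.sum_prod_type_right]
    show T w r (m + 2) κ = _
    rw [T, Finset.sum_filter]
    refine Finset.sum_congr rfl fun l _ => ?_
    simp only [mySnocEquiv, Equiv.coe_fn_mk]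
    by_cases hl : 1 ≤ κ l
    · simp only [hl, if_true]
      have hsum : ∑ i, (κ - delta l) i = m + 1 := by
        have h := (add_delta_eq_iff (ν := κ - delta l) hl).2 rfl
        have : ∑ i, ((κ - delta l) i + delta l i) = m + 2 := by
          rw [show (fun i => (κ - delta l) i + delta l i) = κ from funext fun i => congrFun h i]
          exact hκ
        rw [Finset.sum_add_distrib] at this
        have hd : ∑ i, delta l i = 1 := by simp [delta]
        omega
      rw [ih (κ - delta l) hsum, Finset.sum_filter, Finset.sum_mul, Finset.sum_mul]
      refine Finset.sum_congr rfl fun c _ => ?_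
      simp only [cellConfig_snoc, add_delta_eq_iff hl]
      by_cases hc : cellConfig c = κ - delta l
      · rw [if_pos hc, if_pos hc, ordW_snoc, hc]
      · rw [if_neg hc, if_neg hc, zero_mul, zero_mul]
    · simp only [hl, if_false]
      refine (Finset.sum_eq_zero fun c _ => ?_).symm
      refine if_neg ?_
      intro h
      rw [cellConfig_snoc] at h
      have := congrFun h l
      simp [delta] at this
      omega
end

section
/- Assume r is symmetric, i.e., r(i)(j) = r(j)(i) for all i, j ∈ Fin p. Then for every κ : Fin p → ℕ with Σ_i κ(i) = n and every fixed c₀ : Fin n → Fin p with config(c₀) = κ, one has Σ_{c : config(c) = κ} W_n(c) = (n! / ∏_{i} κ(i)!) · W_n(c₀), where n! / ∏_i κ(i)! is the multinomial coefficient of κ. -/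
open Finset

section Aux

variable {R : Type*} [CommRing R] {p n : ℕ}

/-- Rewrite the double product over ordered pairs as a product over a pair set. -/
lemma pair_prod (f : Fin n → Fin n → R) :
    ∏ a, ∏ b ∈ Finset.univ.filter (fun b => a < b), f a b =
      ∏ q ∈ (Finset.univ ×ˢ Finset.univ).filter
        (fun q : Fin n × Fin n => q.1 < q.2), f q.1 q.2 := by
  rw [Finset.prod_filter,
    Finset.prod_product' (f := fun a b => if a < b then f a b else 1)]
  exact Finset.prod_congr rfl fun a _ => (Finset.prod_filter _ _)

lemma prod_pairs_comp (r : Fin p → Fin p → R)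
    (hsym : ∀ i j : Fin p, r i j = r j i) (c : Fin n → Fin p) (σ : Equiv.Perm (Fin n)) :
    ∏ q ∈ (Finset.univ ×ˢ Finset.univ).filter (fun q : Fin n × Fin n => q.1 < q.2),
        r (c (σ q.1)) (c (σ q.2)) =
      ∏ q ∈ (Finset.univ ×ˢ Finset.univ).filter (fun q : Fin n × Fin n => q.1 < q.2),
        r (c q.1) (c q.2) := by
  apply Finset.prod_nbij'
    (i := fun q => if σ q.1 < σ q.2 then (σ q.1, σ q.2) else (σ q.2, σ q.1))
    (j := fun q => if σ⁻¹ q.1 < σ⁻¹ q.2 then (σ⁻¹ q.1, σ⁻¹ q.2) else (σ⁻¹ q.2, σ⁻¹ q.1))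
  · intro q hq
    simp only [Finset.mem_filter, Finset.mem_product, Finset.mem_univ, true_and] at hq ⊢
    have hne : σ q.1 ≠ σ q.2 := fun h => absurd (σ.injective h) hq.ne
    rcases lt_or_gt_of_ne hne with h | h
    · simp [h]
    · simp [h, not_lt_of_gt h]
  · intro q hq
    simp only [Finset.mem_filter, Finset.mem_product, Finset.mem_univ, true_and] at hq ⊢
    have hne : σ⁻¹ q.1 ≠ σ⁻¹ q.2 := fun h => absurd (σ⁻¹.injective h) hq.ne
    rcases lt_or_gt_of_ne hne with h | h
    · rw [Equiv.Perm.inv_def] at h; simp [h]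
    · rw [Equiv.Perm.inv_def] at h; simp [h, not_lt_of_gt h]
  · intro q hq
    simp only [Finset.mem_filter, Finset.mem_product, Finset.mem_univ, true_and] at hq
    have hne : σ q.1 ≠ σ q.2 := fun h => absurd (σ.injective h) hq.ne
    rcases lt_or_gt_of_ne hne with h | h
    · simp [h, hq]
    · simp [h, not_lt_of_gt h, not_lt_of_gt hq]
  · intro q hq
    simp only [Finset.mem_filter, Finset.mem_product, Finset.mem_univ, true_and] at hq
    have hne : σ⁻¹ q.1 ≠ σ⁻¹ q.2 := fun h => absurd (σ⁻¹.injective h) hq.ne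
    rcases lt_or_gt_of_ne hne with h | h
    · rw [Equiv.Perm.inv_def] at h; simp [h, hq]
    · rw [Equiv.Perm.inv_def] at h; simp [h, not_lt_of_gt h, not_lt_of_gt hq]
  · intro q hq
    by_cases h : σ q.1 < σ q.2
    · simp [h]
    · simp [h, hsym]

/-- `ordW` is invariant under precomposition with a permutation, when `r` is symmetric. -/
lemma ordW_comp (w : Fin p → R) (r : Fin p → Fin p → R)
    (hsym : ∀ i j : Fin p, r i j = r j i) (c : Fin n → Fin p) (σ : Equiv.Perm (Fin n)) :
    ordW w r (c ∘ σ) = ordW w r c := by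
  unfold ordW
  congr 1
  · exact Equiv.prod_comp σ (fun a => w (c a))
  · show (∏ a, ∏ b ∈ Finset.univ.filter (fun b => a < b), r (c (σ a)) (c (σ b))) = _
    rw [pair_prod, pair_prod]
    exact prod_pairs_comp r hsym c σ

lemma cellConfig_comp (c : Fin n → Fin p) (σ : Equiv.Perm (Fin n)) :
    cellConfig (c ∘ σ) = cellConfig c := by
  funext i
  unfold cellConfig
  apply Finset.card_bij (fun a _ => σ a)
  · intro a ha; simpa using (Finset.mem_filter.mp ha).2
  · intro a _ b _ h; exact σ.injective h
  · intro b hb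
    exact ⟨σ⁻¹ b, by simpa using (Finset.mem_filter.mp hb).2, by simp⟩

lemma exists_perm (c c₀ : Fin n → Fin p) (h : cellConfig c = cellConfig c₀) :
    ∃ σ : Equiv.Perm (Fin n), c = c₀ ∘ σ := by
  have hcard : ∀ i, Fintype.card {a // c a = i} = Fintype.card {a // c₀ a = i} := by
    intro i
    rw [Fintype.card_subtype, Fintype.card_subtype]
    exact congrFun h i
  have e : ∀ i, {a // c a = i} ≃ {a // c₀ a = i} := fun i => Fintype.equivOfCardEq (hcard i)
  refine ⟨(Equiv.sigmaFiberEquiv c).symm.trans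
    ((Equiv.sigmaCongrRight e).trans (Equiv.sigmaFiberEquiv c₀)), ?_⟩
  funext a
  exact ((e (c a)) ⟨a, rfl⟩).prop.symm

end Aux

theorem stmt4 {R : Type*} [CommRing R] {p : ℕ} (hp : 1 ≤ p)
    (w : Fin p → R) (r : Fin p → Fin p → R)
    (hsym : ∀ i j : Fin p, r i j = r j i) (n : ℕ)
    (κ : Fin p → ℕ) (hκ : ∑ i, κ i = n)
    (c₀ : Fin n → Fin p) (hc₀ : cellConfig c₀ = κ) :
    ∑ c ∈ Finset.univ.filter (fun c : Fin n → Fin p => cellConfig c = κ), ordW w r c =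
      (Nat.multinomial Finset.univ κ : R) * ordW w r c₀ := by
  classical
  set S := Finset.univ.filter (fun c : Fin n → Fin p => cellConfig c = κ) with hS
  -- each term equals ordW w r c₀
  have hterm : ∀ c ∈ S, ordW w r c = ordW w r c₀ := by
    intro c hc
    have hcc : cellConfig c = cellConfig c₀ := by
      rw [hc₀]; exact (Finset.mem_filter.mp hc).2
    obtain ⟨σ, rfl⟩ := exists_perm c c₀ hcc
    exact ordW_comp w r hsym c₀ σ
  rw [Finset.sum_congr rfl hterm, Finset.sum_const, nsmul_eq_mul]
  congr 2
  -- count: S.card = multinomial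
  have hmem : ∀ σ : Equiv.Perm (Fin n), c₀ ∘ σ ∈ S := by
    intro σ
    simp only [hS, Finset.mem_filter, Finset.mem_univ, true_and]
    rw [cellConfig_comp, hc₀]
  have hfiber : ∀ c ∈ S,
      (Finset.univ.filter (fun σ : Equiv.Perm (Fin n) => c₀ ∘ σ = c)).card =
        ∏ i, Nat.factorial (κ i) := by
    intro c hc
    have hcc : cellConfig c = cellConfig c₀ := by
      rw [hc₀]; exact (Finset.mem_filter.mp hc).2
    obtain ⟨τ, rfl⟩ := exists_perm c c₀ hcc
    have hbij : (Finset.univ.filter (fun σ : Equiv.Perm (Fin n) => c₀ ∘ σ = c₀ ∘ τ)).card =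
        (Finset.univ.filter (fun g : Equiv.Perm (Fin n) => c₀ ∘ g = c₀)).card := by
      apply Finset.card_bij (fun σ _ => σ * τ⁻¹)
      · intro σ hσ
        simp only [Finset.mem_filter, Finset.mem_univ, true_and] at hσ ⊢
        funext a
        have := congrFun hσ (τ⁻¹ a)
        simpa using this
      · intro a _ b _ h
        exact mul_right_cancel h
      · intro g hg
        refine ⟨g * τ, Finset.mem_filter.mpr ⟨Finset.mem_univ _, ?_⟩, by group⟩
        simp only [Finset.mem_filter, Finset.mem_univ, true_and] at hg
        funext a
        have := congrFun hg (τ a)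
        simpa using this
    rw [hbij]
    have := DomMulAct.stabilizer_card c₀
    rw [Fintype.card_subtype] at this
    rw [this]
    refine Finset.prod_congr rfl fun i _ => ?_
    rw [Fintype.card_subtype]
    exact congrArg Nat.factorial (congrFun hc₀ i)
  have hgroup : (Finset.univ : Finset (Equiv.Perm (Fin n))).card =
      ∑ c ∈ S, (Finset.univ.filter (fun σ : Equiv.Perm (Fin n) => c₀ ∘ σ = c)).card :=
    Finset.card_eq_sum_card_fiberwise fun σ _ => hmem σ
  rw [Finset.sum_congr rfl hfiber, Finset.sum_const, smul_eq_mul] at hgroup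
  have hcardperm : (Finset.univ : Finset (Equiv.Perm (Fin n))).card = Nat.factorial n := by
    rw [Finset.card_univ, Fintype.card_perm, Fintype.card_fin]
  have hspec := Nat.multinomial_spec Finset.univ κ
  rw [hκ] at hspec
  have hpos : 0 < ∏ i, Nat.factorial (κ i) := Finset.prod_pos fun i _ => Nat.factorial_pos _
  apply Nat.eq_of_mul_eq_mul_right hpos
  rw [mul_comm] at hspec
  rw [hspec, ← hcardperm, hgroup]
end

section
/- The sum over all permutations σ of Fin n and all cell assignments c : Fin n → Fin p of W^σ_n(c) equals n! · Σ_{c : Fin n → Fin p} W_n(c). (This is the combinatorial content of Proposition 1: the weighted model sum of a universally quantified two-variable sentence with the linear order axiom over an n-element domain equals n! times the weighted model sum in which the order predicate is fixed to the natural order 1 ≤ 2 ≤ … ≤ n.) -/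
open Finset

/-- The order-dependent weight of a cell assignment with respect to a linear order `σ`:
the `r`-product runs over all pairs of distinct `a, b` with `σ a < σ b`. -/
def ordWP {R : Type*} [CommRing R] {p n : ℕ} (w : Fin p → R) (r : Fin p → Fin p → R)
    (σ : Equiv.Perm (Fin n)) (c : Fin n → Fin p) : R :=
  (∏ a, w (c a)) * ∏ a, ∏ b ∈ Finset.univ.filter (fun b => σ a < σ b), r (c a) (c b)

lemma ordWP_eq {R : Type*} [CommRing R] {p n : ℕ} (w : Fin p → R) (r : Fin p → Fin p → R)
    (σ : Equiv.Perm (Fin n)) (c : Fin n → Fin p) :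
    ordWP w r σ c = ordW w r (c ∘ σ.symm) := by
  unfold ordWP ordW
  congr 1
  · exact (Equiv.prod_comp σ.symm (fun a => w (c a))).symm
  · rw [Finset.prod_sigma' _ _ (fun a b => r ((c ∘ σ.symm) a) ((c ∘ σ.symm) b)),
      Finset.prod_sigma' _ _ (fun a b => r (c a) (c b))]
    refine Finset.prod_nbij' (fun q => ⟨σ q.1, σ q.2⟩) (fun q => ⟨σ.symm q.1, σ.symm q.2⟩)
      ?_ ?_ ?_ ?_ ?_ <;> simp

theorem stmt6 {R : Type*} [CommRing R] {p : ℕ} (hp : 1 ≤ p)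
    (w : Fin p → R) (r : Fin p → Fin p → R) (n : ℕ) :
    ∑ σ : Equiv.Perm (Fin n), ∑ c : Fin n → Fin p, ordWP w r σ c =
      (n.factorial : R) * ∑ c : Fin n → Fin p, ordW w r c := by
  have key : ∀ σ : Equiv.Perm (Fin n),
      ∑ c : Fin n → Fin p, ordWP w r σ c = ∑ c : Fin n → Fin p, ordW w r c := by
    intro σ
    simp only [ordWP_eq]
    exact Fintype.sum_equiv (Equiv.arrowCongr σ (Equiv.refl _)) _ _ (fun c => rfl)
  rw [Finset.sum_congr rfl (fun σ _ => key σ), Finset.sum_const, Finset.card_univ,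
    Fintype.card_perm, Fintype.card_fin, nsmul_eq_mul]
end

section
/- Let n ≥ 1. For every c : Fin (n+1) → Fin p, the predecessor weight factorizes over the last element: W¹_{n+1}(c) = W¹_n(c ∘ Fin.castSucc) · w(c(n)) · r̃(c(n−1))(c(n)) · ∏_{a=0}^{n−2} r(c(a))(c(n)). -/
open Finset

/-- The predecessor weight `W¹` of a cell assignment `c : Fin n → Fin p`:
non-consecutive ordered pairs contribute an `r`-factor and consecutive
positions contribute an `r̃`-factor. -/
def predW {R : Type*} [CommRing R] {p n : ℕ} (w : Fin p → R)
    (r : Fin p → Fin p → R) (rt : Fin p → Fin p → R) (c : Fin n → Fin p) : R :=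
  (∏ a, w (c a)) *
    (∏ a : Fin n, ∏ b ∈ Finset.univ.filter
        (fun b : Fin n => (a : ℕ) < (b : ℕ) ∧ (b : ℕ) ≠ (a : ℕ) + 1),
      r (c a) (c b)) *
    ∏ a : Fin n, ∏ b ∈ Finset.univ.filter (fun b : Fin n => (b : ℕ) = (a : ℕ) + 1),
      rt (c a) (c b)

theorem stmt7 {R : Type*} [CommRing R] {p : ℕ} (hp : 1 ≤ p)
    (w : Fin p → R) (r : Fin p → Fin p → R) (rt : Fin p → Fin p → R)
    (n : ℕ) (hn : 1 ≤ n) (c : Fin (n + 1) → Fin p) :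
    predW w r rt c =
      predW w r rt (c ∘ Fin.castSucc) * w (c (Fin.last n)) *
        rt (c ⟨n - 1, by omega⟩) (c (Fin.last n)) *
        ∏ a ∈ Finset.univ.filter (fun a : Fin n => (a : ℕ) + 1 < n),
          r (c a.castSucc) (c (Fin.last n)) := by
  unfold predW
  -- Part 1
  have h1 : (∏ a, w (c a)) = (∏ a, w ((c ∘ Fin.castSucc) a)) * w (c (Fin.last n)) :=
    Fin.prod_univ_castSucc (fun a => w (c a))
  -- Part 3 (rt)
  have h3 : (∏ a : Fin (n+1), ∏ b ∈ Finset.univ.filter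
        (fun b : Fin (n+1) => (b : ℕ) = (a : ℕ) + 1), rt (c a) (c b)) =
      (∏ a : Fin n, ∏ b ∈ Finset.univ.filter
        (fun b : Fin n => (b : ℕ) = (a : ℕ) + 1),
          rt ((c ∘ Fin.castSucc) a) ((c ∘ Fin.castSucc) b)) *
        rt (c ⟨n - 1, by omega⟩) (c (Fin.last n)) := by
    rw [Fin.prod_univ_castSucc (fun a : Fin (n+1) => ∏ b ∈ Finset.univ.filter
        (fun b : Fin (n+1) => (b : ℕ) = (a : ℕ) + 1), rt (c a) (c b))]
    have hempty : (Finset.univ.filter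
        (fun b : Fin (n+1) => (b : ℕ) = ((Fin.last n : Fin (n+1)) : ℕ) + 1)) = ∅ := by
      rw [Finset.filter_eq_empty_iff]
      intro b _
      simp only [Fin.val_last]
      omega
    rw [hempty, Finset.prod_empty, mul_one]
    have hL : (∏ a : Fin n, ∏ b ∈ Finset.univ.filter
        (fun b : Fin (n+1) => (b : ℕ) = ((a.castSucc : Fin (n+1)) : ℕ) + 1),
          rt (c a.castSucc) (c b)) =
        ∏ a : Fin n, rt (c a.castSucc) (c a.succ) := by
      refine Finset.prod_congr rfl fun a _ => ?_
      have hs : (Finset.univ.filter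
          (fun b : Fin (n+1) => (b : ℕ) = ((a.castSucc : Fin (n+1)) : ℕ) + 1)) = {a.succ} := by
        ext b
        simp only [Finset.mem_filter, Finset.mem_univ, true_and, Finset.mem_singleton,
          Fin.coe_castSucc, Fin.ext_iff, Fin.val_succ]
      rw [hs, Finset.prod_singleton]
    rw [hL]
    have hR : (∏ a : Fin n, ∏ b ∈ Finset.univ.filter
        (fun b : Fin n => (b : ℕ) = (a : ℕ) + 1),
          rt ((c ∘ Fin.castSucc) a) ((c ∘ Fin.castSucc) b)) =
        ∏ a ∈ Finset.univ.filter (fun a : Fin n => (a : ℕ) + 1 < n),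
          rt (c a.castSucc) (c a.succ) := by
      rw [← Finset.prod_filter_mul_prod_filter_not Finset.univ
        (fun a : Fin n => (a : ℕ) + 1 < n)]
      have e1 : ∀ a ∈ Finset.univ.filter (fun a : Fin n => (a : ℕ) + 1 < n),
          (∏ b ∈ Finset.univ.filter (fun b : Fin n => (b : ℕ) = (a : ℕ) + 1),
            rt ((c ∘ Fin.castSucc) a) ((c ∘ Fin.castSucc) b)) =
          rt (c a.castSucc) (c a.succ) := by
        intro a ha
        simp only [Finset.mem_filter, Finset.mem_univ, true_and] at ha
        have hs : (Finset.univ.filter (fun b : Fin n => (b : ℕ) = (a : ℕ) + 1)) =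
            {(⟨(a : ℕ) + 1, ha⟩ : Fin n)} := by
          ext b
          simp [Fin.ext_iff]
        rw [hs, Finset.prod_singleton]
        simp only [Function.comp]
        congr 1
      have e2 : ∀ a ∈ Finset.univ.filter (fun a : Fin n => ¬ ((a : ℕ) + 1 < n)),
          (∏ b ∈ Finset.univ.filter (fun b : Fin n => (b : ℕ) = (a : ℕ) + 1),
            rt ((c ∘ Fin.castSucc) a) ((c ∘ Fin.castSucc) b)) = 1 := by
        intro a ha
        have hs : (Finset.univ.filter (fun b : Fin n => (b : ℕ) = (a : ℕ) + 1)) = ∅ := by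
          rw [Finset.filter_eq_empty_iff]
          intro b _
          simp only [Finset.mem_filter, Finset.mem_univ, true_and] at ha
          have := b.isLt
          omega
        rw [hs, Finset.prod_empty]
      rw [Finset.prod_congr rfl e1, Finset.prod_congr rfl e2, Finset.prod_const_one, mul_one]
    rw [hR]
    have hsplit : (∏ a : Fin n, rt (c a.castSucc) (c a.succ)) =
        (∏ a ∈ Finset.univ.filter (fun a : Fin n => (a : ℕ) + 1 < n),
          rt (c a.castSucc) (c a.succ)) *
        rt (c ⟨n - 1, by omega⟩) (c (Fin.last n)) := by
      rw [← Finset.prod_filter_mul_prod_filter_not Finset.univ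
        (fun a : Fin n => (a : ℕ) + 1 < n)]
      congr 1
      have hs : (Finset.univ.filter (fun a : Fin n => ¬ ((a : ℕ) + 1 < n))) =
          {(⟨n - 1, by omega⟩ : Fin n)} := by
        ext a
        simp only [Finset.mem_filter, Finset.mem_univ, true_and, Finset.mem_singleton,
          Fin.ext_iff]
        have := a.isLt
        omega
      rw [hs, Finset.prod_singleton]
      congr 1 <;>
        exact congrArg c (Fin.ext (by simp only [Fin.coe_castSucc, Fin.val_succ, Fin.val_last]; omega))
    rw [hsplit]
  -- Part 2 (r)
  have h2 : (∏ a : Fin (n+1), ∏ b ∈ Finset.univ.filter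
        (fun b : Fin (n+1) => (a : ℕ) < (b : ℕ) ∧ (b : ℕ) ≠ (a : ℕ) + 1),
          r (c a) (c b)) =
      (∏ a : Fin n, ∏ b ∈ Finset.univ.filter
        (fun b : Fin n => (a : ℕ) < (b : ℕ) ∧ (b : ℕ) ≠ (a : ℕ) + 1),
          r ((c ∘ Fin.castSucc) a) ((c ∘ Fin.castSucc) b)) *
      ∏ a ∈ Finset.univ.filter (fun a : Fin n => (a : ℕ) + 1 < n),
        r (c a.castSucc) (c (Fin.last n)) := by
    rw [Fin.prod_univ_castSucc (fun a : Fin (n+1) => ∏ b ∈ Finset.univ.filter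
        (fun b : Fin (n+1) => (a : ℕ) < (b : ℕ) ∧ (b : ℕ) ≠ (a : ℕ) + 1), r (c a) (c b))]
    have hempty : (Finset.univ.filter (fun b : Fin (n+1) =>
        ((Fin.last n : Fin (n+1)) : ℕ) < (b : ℕ) ∧
          (b : ℕ) ≠ ((Fin.last n : Fin (n+1)) : ℕ) + 1)) = ∅ := by
      rw [Finset.filter_eq_empty_iff]
      intro b _
      simp only [Fin.val_last]
      have := b.isLt
      omega
    rw [hempty, Finset.prod_empty, mul_one]
    have key : ∀ a : Fin n,
        (∏ b ∈ Finset.univ.filter (fun b : Fin (n+1) =>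
          ((a.castSucc : Fin (n+1)) : ℕ) < (b : ℕ) ∧
            (b : ℕ) ≠ ((a.castSucc : Fin (n+1)) : ℕ) + 1), r (c a.castSucc) (c b)) =
        (∏ b ∈ Finset.univ.filter
          (fun b : Fin n => (a : ℕ) < (b : ℕ) ∧ (b : ℕ) ≠ (a : ℕ) + 1),
            r ((c ∘ Fin.castSucc) a) ((c ∘ Fin.castSucc) b)) *
        (if (a : ℕ) + 1 < n then r (c a.castSucc) (c (Fin.last n)) else 1) := by
      intro a
      rw [Finset.prod_filter, Fin.prod_univ_castSucc (fun b : Fin (n+1) =>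
        if ((a.castSucc : Fin (n+1)) : ℕ) < (b : ℕ) ∧
            (b : ℕ) ≠ ((a.castSucc : Fin (n+1)) : ℕ) + 1 then r (c a.castSucc) (c b) else 1)]
      congr 1
      · rw [Finset.prod_filter]
        refine Finset.prod_congr rfl fun b _ => ?_
        simp [Function.comp]
      · simp only [Fin.coe_castSucc, Fin.val_last]
        have hiff : ((a : ℕ) < n ∧ n ≠ (a : ℕ) + 1) ↔ (a : ℕ) + 1 < n := by
          have := a.isLt
          omega
        rw [if_congr hiff rfl rfl]
    rw [Finset.prod_congr rfl (fun a _ => key a), Finset.prod_mul_distrib]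
    congr 1
    rw [Finset.prod_ite, Finset.prod_const_one, mul_one]
  rw [h1, h2, h3]
  ring
end

section
/- The sum over all permutations σ of Fin n and all cell assignments c : Fin n → Fin p of W^{1,σ}_n(c) equals n! · Σ_{c : Fin n → Fin p} W¹_n(c); in particular, for each fixed σ, Σ_c W^{1,σ}_n(c) = Σ_c W¹_n(c). (This is the combinatorial content of the claim that the WFOMC of a two-variable sentence with the linear order axiom extended by the immediate predecessor relation equals n! times the weighted sum over models with the order and predecessor relations fixed to the natural ones.) -/
open Finset

/-- The order-dependent predecessor weight `W^{1,σ}` with respect to a linear order `σ`: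
pairs that are consecutive in the order `σ` contribute an `r̃`-factor, and
non-consecutive `σ`-ordered pairs contribute an `r`-factor. -/
def predWP {R : Type*} [CommRing R] {p n : ℕ} (w : Fin p → R)
    (r : Fin p → Fin p → R) (rt : Fin p → Fin p → R) (σ : Equiv.Perm (Fin n))
    (c : Fin n → Fin p) : R :=
  (∏ a, w (c a)) *
    (∏ a : Fin n, ∏ b ∈ Finset.univ.filter
        (fun b : Fin n => (σ a : ℕ) < (σ b : ℕ) ∧ (σ b : ℕ) ≠ (σ a : ℕ) + 1),
      r (c a) (c b)) *
    ∏ a : Fin n, ∏ b ∈ Finset.univ.filter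
        (fun b : Fin n => (σ b : ℕ) = (σ a : ℕ) + 1),
      rt (c a) (c b)


lemma predWP_eq {R : Type*} [CommRing R] {p n : ℕ} (w : Fin p → R)
    (r : Fin p → Fin p → R) (rt : Fin p → Fin p → R) (σ : Equiv.Perm (Fin n))
    (c : Fin n → Fin p) : predWP w r rt σ c = predW w r rt (c ∘ σ.symm) := by
  unfold predW predWP
  simp only [Finset.prod_filter, Function.comp]
  congr 1
  · congr 1
    · exact (Equiv.prod_comp σ.symm (fun a => w (c a))).symm
    · rw [← Equiv.prod_comp σ
        (fun a : Fin n => ∏ b : Fin n, if (a:ℕ) < (b:ℕ) ∧ (b:ℕ) ≠ (a:ℕ)+1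
          then r (c (σ.symm a)) (c (σ.symm b)) else 1)]
      refine Finset.prod_congr rfl fun a _ => ?_
      rw [← Equiv.prod_comp σ
        (fun b : Fin n => if (σ a:ℕ) < (b:ℕ) ∧ (b:ℕ) ≠ (σ a:ℕ)+1
          then r (c (σ.symm (σ a))) (c (σ.symm b)) else 1)]
      simp [Equiv.symm_apply_apply]
  · rw [← Equiv.prod_comp σ
      (fun a : Fin n => ∏ b : Fin n, if (b:ℕ) = (a:ℕ)+1 then rt (c (σ.symm a)) (c (σ.symm b)) else 1)]
    refine Finset.prod_congr rfl fun a _ => ?_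
    rw [← Equiv.prod_comp σ
      (fun b : Fin n => if (b:ℕ) = (σ a:ℕ)+1 then rt (c (σ.symm (σ a))) (c (σ.symm b)) else 1)]
    simp [Equiv.symm_apply_apply]

theorem stmt10 {R : Type*} [CommRing R] {p : ℕ} (hp : 1 ≤ p)
    (w : Fin p → R) (r : Fin p → Fin p → R) (rt : Fin p → Fin p → R)
    (n : ℕ) (hn : 1 ≤ n) :
    (∑ σ : Equiv.Perm (Fin n), ∑ c : Fin n → Fin p, predWP w r rt σ c =
        (n.factorial : R) * ∑ c : Fin n → Fin p, predW w r rt c) ∧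
    (∀ σ : Equiv.Perm (Fin n),
        ∑ c : Fin n → Fin p, predWP w r rt σ c =
          ∑ c : Fin n → Fin p, predW w r rt c) := by
  have key : ∀ σ : Equiv.Perm (Fin n),
      ∑ c : Fin n → Fin p, predWP w r rt σ c = ∑ c : Fin n → Fin p, predW w r rt c := by
    intro σ
    refine Fintype.sum_equiv (σ.arrowCongr (Equiv.refl (Fin p)))
      (fun c => predWP w r rt σ c) (fun c => predW w r rt c) (fun c => ?_)
    exact predWP_eq w r rt σ c
  refine ⟨?_, key⟩
  rw [Finset.sum_congr rfl (fun σ _ => key σ), Finset.sum_const, Finset.card_univ,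
    Fintype.card_perm, Fintype.card_fin, nsmul_eq_mul]
end

section
/- Let n ≥ 3. The sum over all permutations σ of Fin n and all cell assignments c : Fin n → Fin p of W^{°,σ}_n(c) equals n! · Σ_{c : Fin n → Fin p} W°_n(c); in particular, for each fixed σ, Σ_c W^{°,σ}_n(c) = Σ_c W°_n(c). (This is the combinatorial content of the claim that the WFOMC of a two-variable sentence with the linear order axiom extended by the cyclic predecessor relation equals n! times the weighted sum over models where the order and cyclic predecessor relations are fixed to the natural ones.) -/
open Finset

/-- The cyclic weight `W°` of a cell assignment. -/
def cycW {R : Type*} [CommRing R] {p n : ℕ} (w : Fin p → R)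
    (r : Fin p → Fin p → R) (rt : Fin p → Fin p → R) (c : Fin n → Fin p) : R :=
  (∏ a, w (c a)) *
    (∏ a : Fin n, ∏ b ∈ Finset.univ.filter
        (fun b : Fin n => (a : ℕ) < (b : ℕ) ∧ (b : ℕ) ≠ (a : ℕ) + 1 ∧
          ¬((a : ℕ) = 0 ∧ (b : ℕ) = n - 1)),
      r (c a) (c b)) *
    (∏ a : Fin n, ∏ b ∈ Finset.univ.filter (fun b : Fin n => (b : ℕ) = (a : ℕ) + 1),
      rt (c a) (c b)) *
    (if hn : 0 < n then rt (c ⟨n - 1, by omega⟩) (c ⟨0, hn⟩) else 1)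

/-- The order-dependent cyclic weight `W^{°,σ}` with respect to a linear order `σ`:
pairs that are cyclically consecutive in the order `σ` (including the wrap-around
pair) contribute `r̃`-factors and all other `σ`-ordered pairs contribute `r`-factors. -/
def cycWP {R : Type*} [CommRing R] {p n : ℕ} (w : Fin p → R)
    (r : Fin p → Fin p → R) (rt : Fin p → Fin p → R) (σ : Equiv.Perm (Fin n))
    (c : Fin n → Fin p) : R :=
  (∏ a, w (c a)) *
    (∏ a : Fin n, ∏ b ∈ Finset.univ.filter
        (fun b : Fin n => b ≠ a ∧
          ((σ b : ℕ) = (σ a : ℕ) + 1 ∨ ((σ a : ℕ) = n - 1 ∧ (σ b : ℕ) = 0))),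
      rt (c a) (c b)) *
    ∏ a : Fin n, ∏ b ∈ Finset.univ.filter
        (fun b : Fin n => (σ a : ℕ) < (σ b : ℕ) ∧ (σ b : ℕ) ≠ (σ a : ℕ) + 1 ∧
          ¬((σ a : ℕ) = 0 ∧ (σ b : ℕ) = n - 1)),
      r (c a) (c b)

section aux
variable {R : Type*} [CommRing R] {p n : ℕ}

lemma prod2 (σ : Equiv.Perm (Fin n)) (f : Fin n → Fin n → R) :
    ∏ a, ∏ b, f (σ a) (σ b) = ∏ a, ∏ b, f a b := by
  rw [← Equiv.prod_comp σ (fun a => ∏ b, f a b)]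
  exact Finset.prod_congr rfl fun a _ => Equiv.prod_comp σ (f (σ a))

lemma reindex_filter_prod (σ : Equiv.Perm (Fin n)) (P : Fin n → Fin n → Prop)
    [∀ a b, Decidable (P a b)] (f : Fin n → Fin n → R) :
    ∏ a, ∏ b ∈ univ.filter (fun b => P a b), f a b
      = ∏ a, ∏ b ∈ univ.filter (fun b => P (σ a) (σ b)), f (σ a) (σ b) := by
  simp only [Finset.prod_filter]
  exact (prod2 σ fun a b => if P a b then f a b else 1).symm

lemma cycWP_comp (w : Fin p → R) (r rt : Fin p → Fin p → R) (σ : Equiv.Perm (Fin n))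
    (c : Fin n → Fin p) :
    cycWP w r rt σ c = cycWP w r rt 1 (c ∘ σ.symm) := by
  unfold cycWP
  simp only [Equiv.Perm.coe_one, id_eq, Function.comp_apply]
  congr 1
  · congr 1
    · exact (Equiv.prod_comp σ.symm fun a => w (c a)).symm
    · erw [reindex_filter_prod σ
        (fun a b => b ≠ a ∧ ((b:ℕ) = (a:ℕ) + 1 ∨ ((a:ℕ) = n - 1 ∧ (b:ℕ) = 0)))
        (fun a b => rt (c (σ.symm a)) (c (σ.symm b)))]
      simp only [Equiv.symm_apply_apply, ne_eq, EmbeddingLike.apply_eq_iff_eq]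
  · erw [reindex_filter_prod σ
      (fun a b => (a:ℕ) < (b:ℕ) ∧ (b:ℕ) ≠ (a:ℕ) + 1 ∧ ¬((a:ℕ) = 0 ∧ (b:ℕ) = n - 1))
      (fun a b => r (c (σ.symm a)) (c (σ.symm b)))]
    simp only [Equiv.symm_apply_apply]

lemma cycWP_one (hn : 3 ≤ n) (w : Fin p → R) (r rt : Fin p → Fin p → R)
    (c : Fin n → Fin p) :
    cycWP w r rt 1 c = cycW w r rt c := by
  unfold cycWP cycW
  simp only [Equiv.Perm.coe_one, id_eq]
  rw [dif_pos (by omega : 0 < n)]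
  have key : (∏ a : Fin n, ∏ b ∈ univ.filter
        (fun b : Fin n => b ≠ a ∧ ((b:ℕ) = (a:ℕ) + 1 ∨ ((a:ℕ) = n - 1 ∧ (b:ℕ) = 0))),
        rt (c a) (c b))
      = (∏ a : Fin n, ∏ b ∈ univ.filter (fun b : Fin n => (b:ℕ) = (a:ℕ) + 1),
          rt (c a) (c b)) * rt (c ⟨n - 1, by omega⟩) (c ⟨0, by omega⟩) := by
    have h1 : ∀ a : Fin n, univ.filter
        (fun b : Fin n => b ≠ a ∧ ((b:ℕ) = (a:ℕ) + 1 ∨ ((a:ℕ) = n - 1 ∧ (b:ℕ) = 0)))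
        = univ.filter (fun b : Fin n => (b:ℕ) = (a:ℕ) + 1)
          ∪ univ.filter (fun b : Fin n => (a:ℕ) = n - 1 ∧ (b:ℕ) = 0) := by
      intro a
      ext b
      simp only [mem_filter, mem_union, mem_univ, true_and, ne_eq, Fin.ext_iff]
      omega
    have hdisj : ∀ a : Fin n, Disjoint
        (univ.filter (fun b : Fin n => (b:ℕ) = (a:ℕ) + 1))
        (univ.filter (fun b : Fin n => (a:ℕ) = n - 1 ∧ (b:ℕ) = 0)) := by
      intro a
      rw [Finset.disjoint_left]
      intro b hb hb'
      simp only [mem_filter, mem_univ, true_and] at hb hb'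
      omega
    simp only [h1]
    rw [← Finset.prod_mul_distrib.symm.trans
      (Finset.prod_congr rfl fun a _ => (Finset.prod_union (hdisj a)).symm)]
    congr 1
    rw [Fintype.prod_eq_single (⟨n - 1, by omega⟩ : Fin n)]
    · have : univ.filter (fun b : Fin n =>
          (((⟨n - 1, by omega⟩ : Fin n) : ℕ) = n - 1 ∧ (b:ℕ) = 0)) = {⟨0, by omega⟩} := by
        ext b
        simp [Fin.ext_iff]
      rw [this, Finset.prod_singleton]
    · intro a ha
      apply Finset.prod_eq_one
      intro b hb
      simp only [mem_filter, mem_univ, true_and] at hb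
      exact absurd (Fin.ext (by simpa using hb.1)) ha
  erw [key]
  ring

end aux

theorem stmt13 {R : Type*} [CommRing R] {p : ℕ} (hp : 1 ≤ p)
    (w : Fin p → R) (r : Fin p → Fin p → R) (rt : Fin p → Fin p → R)
    (n : ℕ) (hn : 3 ≤ n) :
    (∑ σ : Equiv.Perm (Fin n), ∑ c : Fin n → Fin p, cycWP w r rt σ c =
        (n.factorial : R) * ∑ c : Fin n → Fin p, cycW w r rt c) ∧
    (∀ σ : Equiv.Perm (Fin n),
        ∑ c : Fin n → Fin p, cycWP w r rt σ c =
          ∑ c : Fin n → Fin p, cycW w r rt c) := by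
  have hσ : ∀ σ : Equiv.Perm (Fin n),
      ∑ c : Fin n → Fin p, cycWP w r rt σ c = ∑ c : Fin n → Fin p, cycW w r rt c := by
    intro σ
    calc ∑ c : Fin n → Fin p, cycWP w r rt σ c
        = ∑ c : Fin n → Fin p, cycW w r rt (c ∘ σ.symm) := by
          refine Finset.sum_congr rfl fun c _ => ?_
          rw [cycWP_comp, cycWP_one hn]
      _ = ∑ c : Fin n → Fin p, cycW w r rt c := by
          exact Equiv.sum_comp (Equiv.arrowCongr σ (Equiv.refl (Fin p)))
            (cycW w r rt)
  refine ⟨?_, hσ⟩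
  rw [Finset.sum_congr rfl fun σ _ => hσ σ, Finset.sum_const, Finset.card_univ,
    Fintype.card_perm, Fintype.card_fin, nsmul_eq_mul]
end

section
/- Let k ≥ 1 and n > k. The sum over all permutations σ of Fin n and all cell assignments c : Fin n → Fin p of W^{(k),σ}_n(c) equals n! · Σ_{c : Fin n → Fin p} W^{(k)}_n(c); in particular, for each fixed σ, Σ_c W^{(k),σ}_n(c) = Σ_c W^{(k)}_n(c). (This is the combinatorial content of the claim in Theorem 1 that the WFOMC of a two-variable sentence with the general linear order axiom Linear(≤, Pred₁, …, Pred_k) equals n! times the weighted sum over models where the order and all k predecessor relations are fixed to the natural ones.) -/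
open Finset

/-- The `k`-predecessor weight `W^{(k)}` of a cell assignment. -/
def kW {R : Type*} [CommRing R] {p n : ℕ} (k : ℕ) (w : Fin p → R)
    (r : Fin p → Fin p → R) (rt : ℕ → Fin p → Fin p → R) (c : Fin n → Fin p) : R :=
  (∏ a, w (c a)) *
    (∏ a : Fin n, ∏ b ∈ Finset.univ.filter
        (fun b : Fin n => (a : ℕ) < (b : ℕ) ∧ (b : ℕ) - (a : ℕ) > k),
      r (c a) (c b)) *
    ∏ s ∈ Finset.Icc 1 k, ∏ a : Fin n,
      ∏ b ∈ Finset.univ.filter (fun b : Fin n => (b : ℕ) = (a : ℕ) + s),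
        rt s (c a) (c b)

/-- The order-dependent `k`-predecessor weight `W^{(k),σ}` with respect to a
linear order `σ`: pairs at `σ`-distance `s ≤ k` contribute an `r̃_s`-factor and
pairs at `σ`-distance greater than `k` contribute an `r`-factor. -/
def kWP {R : Type*} [CommRing R] {p n : ℕ} (k : ℕ) (w : Fin p → R)
    (r : Fin p → Fin p → R) (rt : ℕ → Fin p → Fin p → R) (σ : Equiv.Perm (Fin n))
    (c : Fin n → Fin p) : R :=
  (∏ a, w (c a)) *
    (∏ s ∈ Finset.Icc 1 k, ∏ a : Fin n,
      ∏ b ∈ Finset.univ.filter (fun b : Fin n => (σ b : ℕ) = (σ a : ℕ) + s),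
        rt s (c a) (c b)) *
    ∏ a : Fin n, ∏ b ∈ Finset.univ.filter
        (fun b : Fin n => (σ b : ℕ) - (σ a : ℕ) > k),
      r (c a) (c b)

lemma pairprod {n : ℕ} {M : Type*} [CommMonoid M] (q : Fin n → Fin n → Prop)
    [∀ a, DecidablePred (q a)] (f : Fin n → Fin n → M) :
    (∏ a : Fin n, ∏ b ∈ Finset.univ.filter (q a), f a b) =
      ∏ x : Fin n × Fin n, if q x.1 x.2 then f x.1 x.2 else 1 := by
  rw [Fintype.prod_prod_type]
  exact Finset.prod_congr rfl fun a _ => (Finset.prod_filter _ _)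

lemma key {R : Type*} [CommRing R] {p n : ℕ} {k : ℕ} (hk : 1 ≤ k)
    (w : Fin p → R) (r : Fin p → Fin p → R) (rt : ℕ → Fin p → Fin p → R)
    (σ : Equiv.Perm (Fin n)) (c : Fin n → Fin p) :
    kWP k w r rt σ c = kW k w r rt (c ∘ σ.symm) := by
  unfold kW kWP
  have hW : (∏ a, w ((c ∘ σ.symm) a)) = ∏ a, w (c a) :=
    Equiv.prod_comp σ.symm (fun a => w (c a))
  have hR : (∏ a : Fin n, ∏ b ∈ Finset.univ.filter
        (fun b : Fin n => (a : ℕ) < (b : ℕ) ∧ (b : ℕ) - (a : ℕ) > k),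
      r ((c ∘ σ.symm) a) ((c ∘ σ.symm) b)) =
      ∏ a : Fin n, ∏ b ∈ Finset.univ.filter
        (fun b : Fin n => (σ b : ℕ) - (σ a : ℕ) > k), r (c a) (c b) := by
    rw [pairprod, pairprod]
    rw [← Equiv.prod_comp (σ.prodCongr σ)
      (fun x : Fin n × Fin n => if (x.1 : ℕ) < (x.2 : ℕ) ∧ (x.2 : ℕ) - (x.1 : ℕ) > k
        then r ((c ∘ σ.symm) x.1) ((c ∘ σ.symm) x.2) else 1)]
    refine Fintype.prod_congr _ _ fun x => ?_
    simp only [Equiv.prodCongr_apply, Prod.map, Function.comp_apply,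
      Equiv.symm_apply_apply]
    congr 1
    rw [eq_iff_iff]; omega
  have hRT : (∏ s ∈ Finset.Icc 1 k, ∏ a : Fin n,
      ∏ b ∈ Finset.univ.filter (fun b : Fin n => (b : ℕ) = (a : ℕ) + s),
        rt s ((c ∘ σ.symm) a) ((c ∘ σ.symm) b)) =
      ∏ s ∈ Finset.Icc 1 k, ∏ a : Fin n,
      ∏ b ∈ Finset.univ.filter (fun b : Fin n => (σ b : ℕ) = (σ a : ℕ) + s),
        rt s (c a) (c b) := by
    refine Finset.prod_congr rfl fun s _ => ?_
    rw [pairprod, pairprod]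
    rw [← Equiv.prod_comp (σ.prodCongr σ)
      (fun x : Fin n × Fin n => if (x.2 : ℕ) = (x.1 : ℕ) + s
        then rt s ((c ∘ σ.symm) x.1) ((c ∘ σ.symm) x.2) else 1)]
    refine Fintype.prod_congr _ _ fun x => ?_
    simp [Prod.map, Equiv.symm_apply_apply]
  rw [hW, hR, hRT]; ring

theorem stmt17 {R : Type*} [CommRing R] {p : ℕ} (hp : 1 ≤ p) (k : ℕ) (hk : 1 ≤ k)
    (w : Fin p → R) (r : Fin p → Fin p → R) (rt : ℕ → Fin p → Fin p → R)
    (n : ℕ) (hn : k < n) :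
    (∑ σ : Equiv.Perm (Fin n), ∑ c : Fin n → Fin p, kWP k w r rt σ c =
        (n.factorial : R) * ∑ c : Fin n → Fin p, kW k w r rt c) ∧
    (∀ σ : Equiv.Perm (Fin n),
        ∑ c : Fin n → Fin p, kWP k w r rt σ c =
          ∑ c : Fin n → Fin p, kW k w r rt c) := by
  have h2 : ∀ σ : Equiv.Perm (Fin n),
      ∑ c : Fin n → Fin p, kWP k w r rt σ c = ∑ c : Fin n → Fin p, kW k w r rt c := by
    intro σ
    calc ∑ c : Fin n → Fin p, kWP k w r rt σ c
        = ∑ c : Fin n → Fin p, kW k w r rt ((Equiv.arrowCongr σ (Equiv.refl (Fin p))) c) := by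
          refine Finset.sum_congr rfl fun c _ => ?_
          rw [key hk]
          rfl
      _ = ∑ c : Fin n → Fin p, kW k w r rt c :=
          Equiv.sum_comp (Equiv.arrowCongr σ (Equiv.refl (Fin p))) (kW k w r rt)
  refine ⟨?_, h2⟩
  rw [Finset.sum_congr rfl fun σ _ => h2 σ, Finset.sum_const, Finset.card_univ,
    Fintype.card_perm, Fintype.card_fin, nsmul_eq_mul]
end
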